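/- Fix α > 0, A ∈ ℝ^{d×d} antisymmetric, R ∈ ℝ^{k×d}. Define the operator P on pairs w = (w_a, w_r) with w_a ∈ ℝ^{d×d} antisymmetric and w_r ∈ ℝ^{k×d} by P(w) = (skew((4α−1)w_a A + Rᵀ w_r), α(w_r A − R w_a)), where skew(M) = (M − Mᵀ)/2. Let s_c scale the first component by c and fix the second. Then the conjugated operator P^bal = s_{√α} ∘ P ∘ s_{1/√α} is antisymmetric with respect to the Frobenius inner product ⟨(u_a,u_r),(v_a,v_r)⟩ = Tr(u_aᵀv_a) + Tr(u_rᵀv_r) on the space of such pairs. -/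

import Mathlib

open Matrix

/-- The skew part of a square matrix, `(M − Mᵀ)/2`. -/
noncomputable def mskew {d : ℕ} (M : Matrix (Fin d) (Fin d) ℝ) :
    Matrix (Fin d) (Fin d) ℝ := (1/2 : ℝ) • (M - Mᵀ)

/-- The Stiefel parallel-transport operator
`P(w_a, w_r) = (skew((4α−1)w_a A + Rᵀ w_r), α(w_r A − R w_a))`. -/
noncomputable def stiefelP {d k : ℕ} (α : ℝ) (A : Matrix (Fin d) (Fin d) ℝ)
    (R : Matrix (Fin k) (Fin d) ℝ)
    (w : Matrix (Fin d) (Fin d) ℝ × Matrix (Fin k) (Fin d) ℝ) :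
    Matrix (Fin d) (Fin d) ℝ × Matrix (Fin k) (Fin d) ℝ :=
  (mskew ((4 * α - 1) • (w.1 * A) + Rᵀ * w.2), α • (w.2 * A - R * w.1))

/-- The scaling `s_c` of the first component of a pair. -/
def pairScale {d k : ℕ} (c : ℝ)
    (w : Matrix (Fin d) (Fin d) ℝ × Matrix (Fin k) (Fin d) ℝ) :
    Matrix (Fin d) (Fin d) ℝ × Matrix (Fin k) (Fin d) ℝ := (c • w.1, w.2)

/-- The conjugated operator `P^bal = s_{√α} ∘ P ∘ s_{1/√α}` is antisymmetric with
respect to the Frobenius inner product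
`⟨(u_a,u_r),(v_a,v_r)⟩ = Tr(u_aᵀ v_a) + Tr(u_rᵀ v_r)` on pairs with antisymmetric
first components. -/
theorem stiefelP_balanced_antisymmetric (d k : ℕ) (α : ℝ) (hα : 0 < α)
    (A : Matrix (Fin d) (Fin d) ℝ) (hA : Aᵀ = -A)
    (R : Matrix (Fin k) (Fin d) ℝ)
    (u v : Matrix (Fin d) (Fin d) ℝ × Matrix (Fin k) (Fin d) ℝ)
    (hu : u.1ᵀ = -u.1) (hv : v.1ᵀ = -v.1) :
    ((pairScale (Real.sqrt α) (stiefelP α A R (pairScale (Real.sqrt α)⁻¹ u))).1ᵀ *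
        v.1).trace +
      ((pairScale (Real.sqrt α) (stiefelP α A R (pairScale (Real.sqrt α)⁻¹ u))).2ᵀ *
        v.2).trace +
      (((pairScale (Real.sqrt α) (stiefelP α A R (pairScale (Real.sqrt α)⁻¹ v))).1ᵀ *
        u.1).trace +
      ((pairScale (Real.sqrt α) (stiefelP α A R (pairScale (Real.sqrt α)⁻¹ v))).2ᵀ *
        u.2).trace) = 0 := by
  have hs : Real.sqrt α * Real.sqrt α = α := Real.mul_self_sqrt hα.le
  have h0 : Real.sqrt α ≠ 0 := by positivity
  have hc1 : (u.1 * (A * v.1)).trace = (A * (v.1 * u.1)).trace := by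
    rw [Matrix.trace_mul_comm, Matrix.mul_assoc]
  have hc2 : (v.1 * (A * u.1)).trace = (A * (u.1 * v.1)).trace := by
    rw [Matrix.trace_mul_comm, Matrix.mul_assoc]
  have hm1 : (u.2ᵀ * (R * v.1)).trace = -((v.1 * (Rᵀ * u.2)).trace) := by
    rw [← Matrix.trace_transpose (u.2ᵀ * (R * v.1))]
    simp [Matrix.transpose_mul, hv, Matrix.mul_assoc]
  have hm2 : (Rᵀ * (u.2 * v.1)).trace = (v.1 * (Rᵀ * u.2)).trace := by
    rw [← Matrix.mul_assoc, Matrix.trace_mul_comm]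
  have hm3 : (v.2ᵀ * (R * u.1)).trace = -((u.1 * (Rᵀ * v.2)).trace) := by
    rw [← Matrix.trace_transpose (v.2ᵀ * (R * u.1))]
    simp [Matrix.transpose_mul, hu, Matrix.mul_assoc]
  have hm4 : (Rᵀ * (v.2 * u.1)).trace = (u.1 * (Rᵀ * v.2)).trace := by
    rw [← Matrix.mul_assoc, Matrix.trace_mul_comm]
  have h5 : (A * (v.2ᵀ * u.2)).trace = -((A * (u.2ᵀ * v.2)).trace) := by
    rw [← Matrix.trace_transpose (A * (v.2ᵀ * u.2))]
    simp only [Matrix.transpose_mul, Matrix.transpose_transpose, hA,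
      Matrix.mul_neg, Matrix.neg_mul, Matrix.trace_neg, neg_inj]
    rw [Matrix.trace_mul_comm]
  simp only [stiefelP, pairScale, mskew]
  simp only [Matrix.transpose_smul, Matrix.transpose_add, Matrix.transpose_sub,
    Matrix.transpose_mul, Matrix.transpose_transpose, Matrix.smul_mul,
    Matrix.mul_smul, Matrix.add_mul, Matrix.sub_mul, Matrix.mul_sub,
    Matrix.trace_smul, Matrix.trace_add, Matrix.trace_sub, hA, hu, hv,
    Matrix.neg_mul, Matrix.mul_neg, Matrix.trace_neg, smul_neg,
    Matrix.mul_assoc, neg_neg]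
  rw [hc1, hc2, hm1, hm2, hm3, hm4, h5]
  simp only [smul_eq_mul]
  field_simp
  linear_combination (-2) *
    ((v.1 * (Rᵀ * u.2)).trace + (u.1 * (Rᵀ * v.2)).trace) * hs
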